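/- Every polynomial first integral of the vector field X0(z1,z2) = (z2^2, z1^2) (i.e. every polynomial F with z2^2 * ∂F/∂z1 + z1^2 * ∂F/∂z2 = 0) is a polynomial in κ̂ = z1^3 - z2^3. In particular, any homogeneous polynomial first integral of degree not divisible by 3 is zero. -/

import Mathlib

section Univariate
open Polynomial

lemma deg_eq {p : ℝ[X]} {n : ℕ} (hp : p ≠ 0) (hn : n ≠ 0)
    (h : (X ^ 3 - 1) * derivative p = C (n : ℝ) * (X ^ 2 * p)) : p.natDegree = n := by
  set d := p.natDegree with hd
  have hd1 : 1 ≤ d := by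
    rcases Nat.eq_zero_or_pos d with h0 | h0
    · exfalso
      have : derivative p = 0 := by
        rw [Polynomial.eq_C_of_natDegree_eq_zero h0]
        exact derivative_C
      rw [this, mul_zero] at h
      have : p = 0 := by
        have hC : (C (n : ℝ)) ≠ 0 := by
          simp [Nat.cast_eq_zero, hn]
        have hX : (X ^ 2 : ℝ[X]) ≠ 0 := pow_ne_zero _ X_ne_zero
        simp only [zero_eq_mul, mul_eq_zero, hC, hX, false_or] at h
        tauto
      exact hp this
    · exact h0
  have key := congrArg (fun q => Polynomial.coeff q (d + 2)) h
  have hL : p.coeff d ≠ 0 := by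
    rw [hd]; exact Polynomial.leadingCoeff_ne_zero.2 hp
  -- lhs
  have e1 : ((X ^ 3 - 1) * derivative p).coeff (d + 2) = (d : ℝ) * p.coeff d := by
    rw [sub_mul, one_mul, Polynomial.coeff_sub]
    have e2 : ((X ^ 3 : ℝ[X]) * derivative p).coeff (d + 2) = (derivative p).coeff (d - 1) := by
      have : d + 2 = (d - 1) + 3 := by omega
      rw [this, Polynomial.coeff_X_pow_mul]
    have e3 : (derivative p).coeff (d + 2) = 0 := by
      rw [Polynomial.coeff_derivative]
      rw [Polynomial.coeff_eq_zero_of_natDegree_lt (by omega), zero_mul]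
    rw [e2, e3, sub_zero, Polynomial.coeff_derivative]
    have : d - 1 + 1 = d := by omega
    rw [this, Nat.cast_sub hd1]
    push_cast
    ring
  have e4 : (C (n : ℝ) * (X ^ 2 * p)).coeff (d + 2) = (n : ℝ) * p.coeff d := by
    rw [Polynomial.coeff_C_mul]
    have : ((X ^ 2 : ℝ[X]) * p).coeff (d + 2) = p.coeff d := by
      have : d + 2 = d + 2 := rfl
      rw [show d + 2 = d + 2 from rfl, Polynomial.coeff_X_pow_mul]
    rw [this]
  rw [e1, e4] at key
  have : (d : ℝ) = n := mul_right_cancel₀ hL key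
  exact_mod_cast this

lemma X3_ne : (X ^ 3 - 1 : ℝ[X]) ≠ 0 := by
  intro h
  have := congrArg (fun q => Polynomial.coeff q 3) h
  simp [Polynomial.coeff_X_pow, Polynomial.coeff_one] at this

lemma univ_lemma : ∀ n : ℕ, ∀ p : ℝ[X],
    (X ^ 3 - 1) * derivative p = C (n : ℝ) * (X ^ 2 * p) →
    (3 ∣ n → ∃ c : ℝ, p = C c * (X ^ 3 - 1) ^ (n / 3)) ∧ (¬ 3 ∣ n → p = 0) := by
  intro n
  induction n using Nat.strong_induction_on with
  | _ n IH =>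
    intro p h
    rcases eq_or_ne p 0 with hp | hp
    · exact ⟨fun _ => ⟨0, by rw [hp, map_zero, zero_mul]⟩, fun _ => hp⟩
    rcases Nat.eq_zero_or_pos n with hn | hn
    · subst hn
      have hder : derivative p = 0 := by
        have : (X ^ 3 - 1 : ℝ[X]) * derivative p = 0 := by rw [h]; simp
        rcases mul_eq_zero.1 this with h1 | h1
        · exact absurd h1 X3_ne
        · exact h1
      refine ⟨fun _ => ⟨p.coeff 0, ?_⟩, fun h3 => absurd ⟨0, rfl⟩ h3⟩
      conv_lhs => rw [eq_C_of_derivative_eq_zero hder]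
      norm_num
    -- n > 0
    have hdvd : (X ^ 3 - 1 : ℝ[X]) ∣ p := by
      have h1 : (X ^ 3 - 1 : ℝ[X]) ∣ C (n : ℝ) * (X ^ 2 * p) := ⟨derivative p, h.symm⟩
      have hcop : IsCoprime (X ^ 3 - 1 : ℝ[X]) (C (n : ℝ) * X ^ 2) := by
        apply IsCoprime.mul_right
        · refine ⟨0, C ((n : ℝ))⁻¹, ?_⟩
          rw [zero_mul, zero_add, ← C_mul, inv_mul_cancel₀ (by positivity : (n:ℝ) ≠ 0), C_1]
        · exact (IsCoprime.pow_right ⟨-1, X ^ 2, by ring⟩)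
      have : (X ^ 3 - 1 : ℝ[X]) ∣ (C (n : ℝ) * X ^ 2) * p := by
        rw [mul_assoc]; exact h1
      exact hcop.dvd_of_dvd_mul_left this
    obtain ⟨q, hq⟩ := hdvd
    have hq0 : q ≠ 0 := by rintro rfl; simp at hq; exact hp hq
    have hdeg : p.natDegree = n := deg_eq hp (by omega) h
    have hn3 : 3 ≤ n := by
      have := Polynomial.natDegree_mul X3_ne hq0
      rw [← hq, hdeg] at this
      have h3 : (X ^ 3 - 1 : ℝ[X]).natDegree = 3 := by
        compute_degree!
      omega
    -- derive equation for q
    have heq : (X ^ 3 - 1) * derivative q = C ((n - 3 : ℕ) : ℝ) * (X ^ 2 * q) := by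
      have hder : derivative p = C 3 * X ^ 2 * q + (X ^ 3 - 1) * derivative q := by
        rw [hq, Polynomial.derivative_mul]
        simp
        left; rw [← C_1, ← C_add]; norm_num
      rw [hder, hq] at h
      have h2 : (X ^ 3 - 1 : ℝ[X]) * ((C 3 * X ^ 2 * q) + (X ^ 3 - 1) * derivative q)
          = (X ^ 3 - 1) * (C (n : ℝ) * (X ^ 2 * q)) := by
        rw [h]; ring
      have h3 := mul_left_cancel₀ X3_ne h2
      have hcast : ((n - 3 : ℕ) : ℝ) = (n : ℝ) - 3 := by
        push_cast [Nat.cast_sub hn3]; ring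
      rw [hcast, map_sub]
      linear_combination h3
    obtain ⟨IH1, IH2⟩ := IH (n - 3) (by omega) q heq
    constructor
    · intro h3
      obtain ⟨c, hc⟩ := IH1 (by omega)
      refine ⟨c, ?_⟩
      rw [hq, hc]
      have : (n - 3) / 3 + 1 = n / 3 := by omega
      rw [← this, pow_succ]
      ring
    · intro h3
      have : q = 0 := IH2 (by omega)
      rw [hq, this, mul_zero]

end Univariate

open MvPolynomial


noncomputable def ph (F : MvPolynomial (Fin 2) ℝ) : Polynomial ℝ :=
  MvPolynomial.aeval ![Polynomial.X, 1] F

lemma ph_deriv (F : MvPolynomial (Fin 2) ℝ) :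
    Polynomial.derivative (ph F) = ph (pderiv 0 F) := by
  induction F using MvPolynomial.induction_on with
  | C a => simp [ph]
  | add p q hp hq => simp only [ph, map_add, Polynomial.derivative_add] at *; rw [hp, hq]
  | mul_X p i hp =>
    have h1 : pderiv 0 (p * X i) = pderiv 0 p * X i + p * pderiv 0 (X i) := pderiv_mul
    rw [h1]
    simp only [ph, map_mul, map_add, Polynomial.derivative_mul] at *
    rw [hp]
    fin_cases i <;> simp <;> ring

lemma euler_mono (m : Fin 2 →₀ ℕ) (c : ℝ) :
    MvPolynomial.X 0 * pderiv 0 (monomial m c) + MvPolynomial.X 1 * pderiv 1 (monomial m c)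
      = (m 0 + m 1) • (monomial m c : MvPolynomial (Fin 2) ℝ) := by
  have key : ∀ i : Fin 2, MvPolynomial.X i * pderiv i (monomial m c)
      = (m i) • (monomial m c : MvPolynomial (Fin 2) ℝ) := by
    intro i
    rw [pderiv_monomial]
    rcases Nat.eq_zero_or_pos (m i) with h | h
    · simp [h]
    · have hs : (m - Finsupp.single i 1) + Finsupp.single i 1 = m := by
        ext j
        rcases eq_or_ne j i with hj | hj
        · subst hj; simp; omega
        · simp [Finsupp.single_apply, hj.symm]
      rw [MvPolynomial.X, monomial_mul, one_mul, add_comm, hs, MvPolynomial.smul_monomial]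
      congr 1
      push_cast
      ring
  rw [key 0, key 1, add_smul]

lemma hom_iff (F : MvPolynomial (Fin 2) ℝ) (n : ℕ) :
    F.IsHomogeneous n ↔ ∀ m : Fin 2 →₀ ℕ, MvPolynomial.coeff m F ≠ 0 → m 0 + m 1 = n := by
  constructor
  · intro h m hm
    simpa [Finsupp.weight_apply, Finsupp.sum_fintype, Fin.sum_univ_two] using h hm
  · intro h d hd
    simpa [Finsupp.weight_apply, Finsupp.sum_fintype, Fin.sum_univ_two] using h d hd

lemma euler {n : ℕ} {F : MvPolynomial (Fin 2) ℝ} (hF : F.IsHomogeneous n) :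
    MvPolynomial.X 0 * pderiv 0 F + MvPolynomial.X 1 * pderiv 1 F = n • F := by
  conv_lhs => rw [F.as_sum]
  conv_rhs => rw [F.as_sum]
  rw [map_sum (pderiv 0), map_sum (pderiv 1), Finset.mul_sum, Finset.mul_sum,
    ← Finset.sum_add_distrib, Finset.smul_sum]
  refine Finset.sum_congr rfl fun m hm => ?_
  rw [euler_mono, (hom_iff F n).1 hF m (MvPolynomial.mem_support_iff.1 hm)]

lemma ph_eq_sum (F : MvPolynomial (Fin 2) ℝ) :
    ph F = ∑ m ∈ F.support, Polynomial.C (MvPolynomial.coeff m F) * Polynomial.X ^ (m 0) := by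
  conv_lhs => rw [F.as_sum]
  rw [ph, map_sum]
  refine Finset.sum_congr rfl fun m hm => ?_
  rw [MvPolynomial.aeval_monomial, Finsupp.prod_fintype _ _ (fun i => pow_zero _), Fin.prod_univ_two]
  simp [Polynomial.algebraMap_eq]

lemma ph_injective {n : ℕ} {F : MvPolynomial (Fin 2) ℝ} (hF : F.IsHomogeneous n)
    (h : ph F = 0) : F = 0 := by
  ext m
  by_contra hc
  have hm : m ∈ F.support := MvPolynomial.mem_support_iff.2 hc
  have hdeg := (hom_iff F n).1 hF m hc
  have hcoeff : Polynomial.coeff (ph F) (m 0) = MvPolynomial.coeff m F := by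
    rw [ph_eq_sum]
    rw [Polynomial.finset_sum_coeff]
    rw [Finset.sum_eq_single m]
    · simp
    · intro m' hm' hne
      have h1 : m' 0 + m' 1 = n := (hom_iff F n).1 hF m' (MvPolynomial.mem_support_iff.1 hm')
      have h2 : m' 0 ≠ m 0 := by
        intro he
        apply hne
        have h3 : m' 1 = m 1 := by omega
        ext j
        fin_cases j
        · exact he
        · exact h3
      simp only [Polynomial.coeff_C_mul, Polynomial.coeff_X_pow]
      rw [if_neg (fun he => h2 he.symm), mul_zero]
    · intro h'; exact absurd hm h'
  rw [h] at hcoeff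
  simp at hcoeff
  exact hc hcoeff.symm

noncomputable abbrev kap : MvPolynomial (Fin 2) ℝ := X 0 ^ 3 - X 1 ^ 3

lemma kap_hom : (kap).IsHomogeneous 3 := by
  apply MvPolynomial.IsHomogeneous.sub
  · simpa using (MvPolynomial.isHomogeneous_X ℝ (0 : Fin 2)).pow 3
  · simpa using (MvPolynomial.isHomogeneous_X ℝ (1 : Fin 2)).pow 3

lemma ph_add (a b : MvPolynomial (Fin 2) ℝ) : ph (a + b) = ph a + ph b := map_add (MvPolynomial.aeval ![Polynomial.X, 1]) a b
lemma ph_mulx (a b : MvPolynomial (Fin 2) ℝ) : ph (a * b) = ph a * ph b := map_mul (MvPolynomial.aeval ![Polynomial.X, 1]) a b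
lemma ph_pow (a : MvPolynomial (Fin 2) ℝ) (k : ℕ) : ph (a ^ k) = ph a ^ k := map_pow (MvPolynomial.aeval ![Polynomial.X, 1]) a k
lemma ph_sub (a b : MvPolynomial (Fin 2) ℝ) : ph (a - b) = ph a - ph b := map_sub (MvPolynomial.aeval ![Polynomial.X, 1]) a b
lemma ph_zero : ph 0 = 0 := map_zero (MvPolynomial.aeval ![Polynomial.X, 1])
lemma ph_nsmul (a : MvPolynomial (Fin 2) ℝ) (k : ℕ) : ph (k • a) = k • ph a := by
  simp [ph]

lemma ph_X0 : ph (X 0) = Polynomial.X := by simp [ph]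
lemma ph_X1 : ph (X 1) = 1 := by simp [ph]

lemma hom_main {n : ℕ} {F : MvPolynomial (Fin 2) ℝ} (hF : F.IsHomogeneous n)
    (hD : X 1 ^ 2 * pderiv 0 F + X 0 ^ 2 * pderiv 1 F = 0) :
    (3 ∣ n → ∃ c : ℝ, F = C c * kap ^ (n / 3)) ∧ (¬ 3 ∣ n → F = 0) := by
  set p := ph F with hp
  have h0 : ph (pderiv 0 F) = Polynomial.derivative p := (ph_deriv F).symm
  have heuler := euler hF
  have heuler' : Polynomial.X * ph (pderiv 0 F) + ph (pderiv 1 F) = n • p := by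
    have := congrArg ph heuler
    rw [ph_add, ph_mulx, ph_mulx, ph_X0, ph_X1, one_mul, ph_nsmul] at this
    rw [this, ← hp]
  have hD' : Polynomial.derivative p
      + Polynomial.X ^ 2 * ((n • p : Polynomial ℝ) - Polynomial.X * Polynomial.derivative p) = 0 := by
    have := congrArg ph hD
    rw [ph_add, ph_mulx, ph_mulx, ph_pow, ph_pow, ph_X0, ph_X1, ph_zero] at this
    rw [← heuler', h0] at *
    rw [one_pow, one_mul] at this
    linear_combination this
  have hkey : (Polynomial.X ^ 3 - 1) * Polynomial.derivative p
      = Polynomial.C (n : ℝ) * (Polynomial.X ^ 2 * p) := by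
    have hsm : (n • p : Polynomial ℝ) = Polynomial.C (n : ℝ) * p := by
      rw [nsmul_eq_mul, Polynomial.C_eq_natCast]
    rw [hsm] at hD'
    linear_combination -hD'
  obtain ⟨U1, U2⟩ := univ_lemma n p hkey
  constructor
  · intro h3
    obtain ⟨c, hc⟩ := U1 h3
    refine ⟨c, ?_⟩
    have hG : (C c * kap ^ (n / 3) : MvPolynomial (Fin 2) ℝ).IsHomogeneous n := by
      have := (kap_hom.pow (n / 3)).C_mul c
      rwa [Nat.mul_div_cancel' h3] at this
    have hdiff : (F - C c * kap ^ (n / 3)).IsHomogeneous n := hF.sub hG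
    have hphdiff : ph (F - C c * kap ^ (n / 3)) = 0 := by
      rw [ph_sub, ph_mulx, ph_pow, ← hp, hc]
      have h1 : ph (C c : MvPolynomial (Fin 2) ℝ) = Polynomial.C c := by
        simp [ph, Polynomial.algebraMap_eq]
      have h2 : ph kap = Polynomial.X ^ 3 - 1 := by
        show ph (X 0 ^ 3 - X 1 ^ 3) = _
        rw [ph_sub, ph_pow, ph_pow, ph_X0, ph_X1, one_pow]
      rw [h1, h2]
      ring
    exact sub_eq_zero.1 (ph_injective hdiff hphdiff)
  · intro h3
    exact ph_injective hF (U2 h3)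

lemma Dmono (i j : Fin 2) (m : Fin 2 →₀ ℕ) (c : ℝ) :
    (X j ^ 2 * pderiv i (monomial m c) : MvPolynomial (Fin 2) ℝ).IsHomogeneous
      (m 0 + m 1 + 1) := by
  rw [pderiv_monomial]
  rcases Nat.eq_zero_or_pos (m i) with h | h
  · rw [h]
    push_cast
    rw [mul_zero, map_zero, mul_zero]
    exact MvPolynomial.isHomogeneous_zero _ _ _
  rw [X_pow_eq_monomial, monomial_mul, one_mul]
  rw [hom_iff]
  intro m'' hc''
  rw [coeff_monomial] at hc''
  have hm'' : Finsupp.single j 2 + (m - Finsupp.single i 1) = m'' := by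
    by_contra hne
    rw [if_neg hne] at hc''
    exact hc'' rfl
  subst hm''
  simp only [Finsupp.add_apply, Finsupp.tsub_apply, Finsupp.single_apply]
  fin_cases i <;> fin_cases j <;> simp_all <;> omega

lemma D_hom {n : ℕ} {F : MvPolynomial (Fin 2) ℝ} (hF : F.IsHomogeneous n) :
    (X 1 ^ 2 * pderiv 0 F + X 0 ^ 2 * pderiv 1 F : MvPolynomial (Fin 2) ℝ).IsHomogeneous
      (n + 1) := by
  have hrep : (X 1 ^ 2 * pderiv 0 F + X 0 ^ 2 * pderiv 1 F : MvPolynomial (Fin 2) ℝ)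
      = ∑ m ∈ F.support, (X 1 ^ 2 * pderiv 0 (monomial m (MvPolynomial.coeff m F))
        + X 0 ^ 2 * pderiv 1 (monomial m (MvPolynomial.coeff m F))) := by
    conv_lhs => rw [F.as_sum]
    rw [map_sum (pderiv 0), map_sum (pderiv 1), Finset.mul_sum, Finset.mul_sum,
      ← Finset.sum_add_distrib]
  rw [hrep]
  apply MvPolynomial.IsHomogeneous.sum
  intro m hm
  have hdeg : m 0 + m 1 = n := (hom_iff F n).1 hF m (MvPolynomial.mem_support_iff.1 hm)
  have h1 := Dmono 0 1 m (MvPolynomial.coeff m F)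
  have h2 := Dmono 1 0 m (MvPolynomial.coeff m F)
  rw [hdeg] at h1 h2
  exact h1.add h2

lemma comp_zero {F : MvPolynomial (Fin 2) ℝ}
    (hD : X 1 ^ 2 * pderiv 0 F + X 0 ^ 2 * pderiv 1 F = 0) (d : ℕ) :
    X 1 ^ 2 * pderiv 0 (homogeneousComponent d F)
      + X 0 ^ 2 * pderiv 1 (homogeneousComponent d F) = 0 := by
  set N := F.totalDegree with hN
  by_cases hd : d < N + 1
  · have hsum : ∑ e ∈ Finset.range (N + 1), homogeneousComponent e F = F :=
      sum_homogeneousComponent F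
    have hDsum : ∑ e ∈ Finset.range (N + 1),
        (X 1 ^ 2 * pderiv 0 (homogeneousComponent e F)
          + X 0 ^ 2 * pderiv 1 (homogeneousComponent e F)) = 0 := by
      rw [Finset.sum_add_distrib, ← Finset.mul_sum, ← Finset.mul_sum,
        ← map_sum (pderiv 0), ← map_sum (pderiv 1), hsum]
      exact hD
    have := congrArg (homogeneousComponent (d + 1)) hDsum
    rw [map_sum, map_zero] at this
    have heach : ∀ e ∈ Finset.range (N + 1),
        homogeneousComponent (d + 1)
          (X 1 ^ 2 * pderiv 0 (homogeneousComponent e F)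
            + X 0 ^ 2 * pderiv 1 (homogeneousComponent e F))
        = if d = e then (X 1 ^ 2 * pderiv 0 (homogeneousComponent e F)
            + X 0 ^ 2 * pderiv 1 (homogeneousComponent e F)) else 0 := by
      intro e _
      have hhom := D_hom (homogeneousComponent_isHomogeneous e F)
      rw [homogeneousComponent_of_mem ((mem_homogeneousSubmodule _ _).2 hhom)]
      by_cases he : d = e
      · rw [if_pos (by omega : d + 1 = e + 1), if_pos he]
      · rw [if_neg (fun hcon : d + 1 = e + 1 => he (by omega)), if_neg he]
    rw [Finset.sum_congr rfl heach, Finset.sum_ite_eq (Finset.range (N + 1)),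
      if_pos (Finset.mem_range.2 hd)] at this
    exact this
  · have : homogeneousComponent d F = 0 :=
      homogeneousComponent_eq_zero _ _ (by omega)
    rw [this, map_zero, map_zero, mul_zero, mul_zero, add_zero]

theorem stmt4 :
    (∀ F : MvPolynomial (Fin 2) ℝ,
      X 1 ^ 2 * pderiv 0 F + X 0 ^ 2 * pderiv 1 F = 0 →
      ∃ g : Polynomial ℝ, F = Polynomial.aeval (X 0 ^ 3 - X 1 ^ 3 : MvPolynomial (Fin 2) ℝ) g) ∧
    (∀ (n : ℕ) (F : MvPolynomial (Fin 2) ℝ), F.IsHomogeneous n →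
      X 1 ^ 2 * pderiv 0 F + X 0 ^ 2 * pderiv 1 F = 0 → ¬ (3 ∣ n) → F = 0) := by
  constructor
  · intro F hD
    have hcomp : ∀ d : ℕ, ∃ gd : Polynomial ℝ,
        homogeneousComponent d F
          = Polynomial.aeval (X 0 ^ 3 - X 1 ^ 3 : MvPolynomial (Fin 2) ℝ) gd := by
      intro d
      have h1 := comp_zero hD d
      have h2 := hom_main (homogeneousComponent_isHomogeneous d F) h1
      by_cases h3 : 3 ∣ d
      · obtain ⟨c, hc⟩ := h2.1 h3
        refine ⟨Polynomial.C c * Polynomial.X ^ (d / 3), ?_⟩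
        rw [hc, map_mul, Polynomial.aeval_C, map_pow, Polynomial.aeval_X]
        rw [MvPolynomial.algebraMap_eq]
      · exact ⟨0, by rw [h2.2 h3, map_zero]⟩
    choose g' hg' using hcomp
    refine ⟨∑ d ∈ Finset.range (F.totalDegree + 1), g' d, ?_⟩
    conv_lhs => rw [← sum_homogeneousComponent F]
    rw [map_sum]
    exact Finset.sum_congr rfl fun d _ => hg' d
  · intro n F hF hD h3
    exact (hom_main hF hD).2 h3
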